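/- arXiv:2403.00149 — 2 statements merged into one kernel-verified Lean document; each statement's English description precedes it below -/
import Mathlib

section
/- Let P(x) = a₋₁x⁻¹ + a₀ + a₁x be an integer Laurent trinomial, p a prime, and q, r nonnegative integers with r < p. Then ct[P(x)^(qp+r)] ≡ ct[P(x)^q] · ct[P(x)^r] (mod p). -/
open LaurentPolynomial

/-- The constant term of an integer Laurent polynomial. -/
noncomputable def ct (Q : LaurentPolynomial ℤ) : ℤ := AddMonoidAlgebra.coeff Q 0

/-- The Laurent trinomial `a₋₁ x⁻¹ + a₀ + a₁ x`. -/
noncomputable def Ptri (am1 a0 a1 : ℤ) : LaurentPolynomial ℤ :=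
  C am1 * T (-1) + C a0 + C a1 * T 1

namespace StmtAux

/-- Cast coefficients `ℤ → ZMod p` as a function on Laurent polynomials. -/
noncomputable def mr (p : ℕ) (Q : LaurentPolynomial ℤ) : LaurentPolynomial (ZMod p) :=
  AddMonoidAlgebra.ofCoeff (Finsupp.mapRange (fun z : ℤ => (z : ZMod p)) (by simp) Q.coeff)

lemma mr_apply (p : ℕ) (Q : LaurentPolynomial ℤ) (n : ℤ) : (mr p Q).coeff n = ((Q.coeff n : ℤ) : ZMod p) :=
  Finsupp.mapRange_apply (hf := Int.cast_zero)

lemma mr_single (p : ℕ) (a b : ℤ) :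
    mr p (AddMonoidAlgebra.single a b) = AddMonoidAlgebra.single a ((b : ZMod p)) :=
  congrArg AddMonoidAlgebra.ofCoeff Finsupp.mapRange_single

lemma mr_add (p : ℕ) (f g : LaurentPolynomial ℤ) : mr p (f + g) = mr p f + mr p g :=
  congrArg AddMonoidAlgebra.ofCoeff (Finsupp.mapRange_add (by simp) f.coeff g.coeff)

lemma mr_zero (p : ℕ) : mr p 0 = 0 := congrArg AddMonoidAlgebra.ofCoeff Finsupp.mapRange_zero

lemma mr_single_mul (p : ℕ) (a b : ℤ) (g : LaurentPolynomial ℤ) :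
    mr p (AddMonoidAlgebra.single a b * g) =
      mr p (AddMonoidAlgebra.single a b) * mr p g := by
  induction g using AddMonoidAlgebra.induction with
  | zero =>
    show mr p (_ * (0 : LaurentPolynomial ℤ)) = _ * mr p (0 : LaurentPolynomial ℤ)
    simp [mr_zero]
  | single_add c d g _ _ ihg =>
    rw [mul_add, mr_add, mr_add, mul_add, ihg]
    congr 1
    rw [AddMonoidAlgebra.single_mul_single (R := ℤ) (M := ℤ), mr_single, mr_single, mr_single,
      AddMonoidAlgebra.single_mul_single, Int.cast_mul]

lemma mr_mul (p : ℕ) (f g : LaurentPolynomial ℤ) : mr p (f * g) = mr p f * mr p g := by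
  induction f using AddMonoidAlgebra.induction with
  | zero =>
    show mr p ((0 : LaurentPolynomial ℤ) * _) = mr p (0 : LaurentPolynomial ℤ) * _
    simp [mr_zero]
  | single_add a b f _ _ ih =>
    rw [add_mul, mr_add, mr_add, add_mul, ih, mr_single_mul]

lemma mr_one (p : ℕ) : mr p 1 = 1 := by
  rw [AddMonoidAlgebra.one_def, AddMonoidAlgebra.one_def, mr_single, Int.cast_one]

/-- `mr` as a ring hom. -/
noncomputable def phi (p : ℕ) : LaurentPolynomial ℤ →+* LaurentPolynomial (ZMod p) where
  toFun := mr p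
  map_zero' := mr_zero p
  map_add' := mr_add p
  map_one' := mr_one p
  map_mul' := mr_mul p

instance instCharP (p : ℕ) [Fact p.Prime] : CharP (LaurentPolynomial (ZMod p)) p :=
  charP_of_injective_ringHom (f := LaurentPolynomial.C (R := ZMod p)) (AddMonoidAlgebra.single_right_injective (R := ZMod p) (M := ℤ) (m := 0)) p

/-- "expand by p": multiply all exponents by p. -/
noncomputable def Ep (p : ℕ) : LaurentPolynomial (ZMod p) →+* LaurentPolynomial (ZMod p) :=
  AddMonoidAlgebra.mapDomainRingHom (ZMod p) (AddMonoidHom.mulLeft (p : ℤ))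

lemma Ep_single (p : ℕ) (a : ℤ) (b : ZMod p) :
    Ep p (AddMonoidAlgebra.single a b) = AddMonoidAlgebra.single ((p : ℤ) * a) b := by
  show AddMonoidAlgebra.mapDomain _ (AddMonoidAlgebra.single a b) = _
  rw [AddMonoidAlgebra.mapDomain_single]
  rfl

lemma pow_card (p : ℕ) [hp : Fact p.Prime] (Q : LaurentPolynomial (ZMod p)) :
    Q ^ p = Ep p Q := by
  induction Q using AddMonoidAlgebra.induction with
  | zero => rw [map_zero]; exact zero_pow hp.out.ne_zero
  | single_add a b f _ _ ih =>
    rw [map_add, add_pow_char, ih, AddMonoidAlgebra.single_pow, ZMod.pow_card, Ep_single]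
    congr 2

lemma Ep_apply_zero (p : ℕ) [hp : Fact p.Prime] (Q : LaurentPolynomial (ZMod p)) :
    (Ep p Q).coeff 0 = Q.coeff 0 := by
  have hinj : Function.Injective (fun x : ℤ => (p : ℤ) * x) :=
    mul_right_injective₀ (by exact_mod_cast hp.out.ne_zero)
  have := Finsupp.mapDomain_apply hinj Q.coeff 0
  rw [mul_zero] at this
  exact this


lemma support_pow (p : ℕ) (Q : LaurentPolynomial (ZMod p))
    (hQ : Q.coeff.support ⊆ Finset.Icc (-1 : ℤ) 1) (r : ℕ) :
    (Q ^ r).coeff.support ⊆ Finset.Icc (-(r : ℤ)) r := by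
  induction r with
  | zero =>
    rw [pow_zero, AddMonoidAlgebra.one_def]
    refine (Finsupp.support_single_subset).trans ?_
    simp
  | succ r ih =>
    rw [pow_succ']
    refine (AddMonoidAlgebra.support_coeff_mul_subset Q (Q ^ r)).trans ?_
    intro n hn
    rw [Finset.mem_add] at hn
    obtain ⟨x, hx, y, hy, rfl⟩ := hn
    have hx' := hQ hx
    have hy' := ih hy
    rw [Finset.mem_Icc] at *
    push_cast
    omega

lemma key (p : ℕ) [hp : Fact p.Prime] (r : ℕ) (hr : r < p) (A B : LaurentPolynomial (ZMod p))
    (hB : B.coeff.support ⊆ Finset.Icc (-(r : ℤ)) r) :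
    (Ep p A * B).coeff 0 = A.coeff 0 * B.coeff 0 := by
  induction A using AddMonoidAlgebra.induction with
  | zero =>
    have h1 : (Ep p) (0 : LaurentPolynomial (ZMod p)) = 0 := map_zero _
    rw [h1, zero_mul]
    show (0 : LaurentPolynomial (ZMod p)).coeff 0 = (0 : LaurentPolynomial (ZMod p)).coeff 0 * B.coeff 0
    rw [AddMonoidAlgebra.coeff_zero, Finsupp.zero_apply, zero_mul]
  | single_add a b f _ _ ih =>
    rw [map_add, add_mul, AddMonoidAlgebra.coeff_add, AddMonoidAlgebra.coeff_add, Finsupp.add_apply, Finsupp.add_apply, ih, Ep_single, add_mul]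
    congr 1
    have hsingle : (AddMonoidAlgebra.single ((p : ℤ) * a) b * B).coeff 0 = b * B.coeff (-((p : ℤ) * a)) :=
      AddMonoidAlgebra.coeff_single_mul_eq_mul_coeff _ (fun z _ => by constructor <;> intro h <;> omega)
    rw [hsingle]
    rcases eq_or_ne a 0 with rfl | ha
    · simp [Finsupp.single_apply, AddMonoidAlgebra.coeff_single]
    · have hBz : B.coeff (-((p : ℤ) * a)) = 0 := by
        apply Finsupp.notMem_support_iff.mp
        intro hmem
        have := hB hmem
        rw [Finset.mem_Icc] at this
        have h1 : (1 : ℤ) ≤ |a| := by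
          rcases lt_or_gt_of_ne ha with h | h <;> [rw [abs_of_neg h]; rw [abs_of_pos h]] <;> omega
        have h2 : (p : ℤ) * 1 ≤ (p : ℤ) * |a| :=
          mul_le_mul_of_nonneg_left h1 (by positivity)
        have h3 : |(p : ℤ) * a| = (p : ℤ) * |a| := by
          rw [abs_mul, abs_of_nonneg (by positivity : (0:ℤ) ≤ (p:ℤ))]
        have h4 : |-((p : ℤ) * a)| ≤ (r : ℤ) := abs_le.mpr ⟨by omega, by omega⟩
        rw [abs_neg, h3] at h4
        have : (r : ℤ) < (p : ℤ) := by exact_mod_cast hr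
        omega
      rw [hBz, AddMonoidAlgebra.coeff_single, Finsupp.single_apply, if_neg ha, zero_mul, mul_zero]

lemma Ptri_eq (am1 a0 a1 : ℤ) :
    Ptri am1 a0 a1 = AddMonoidAlgebra.single (-1) am1 + AddMonoidAlgebra.single 0 a0 +
      AddMonoidAlgebra.single 1 a1 := by
  rw [Ptri, ← LaurentPolynomial.single_eq_C_mul_T, ← LaurentPolynomial.single_eq_C_mul_T,
    ← LaurentPolynomial.single_eq_C]

lemma support_Ptri (am1 a0 a1 : ℤ) : (Ptri am1 a0 a1).coeff.support ⊆ Finset.Icc (-1 : ℤ) 1 := by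
  intro n hn
  rw [Finsupp.mem_support_iff, Ptri_eq] at hn
  rw [Finset.mem_Icc]
  by_contra h
  apply hn
  rw [AddMonoidAlgebra.coeff_add, AddMonoidAlgebra.coeff_add, Finsupp.add_apply, Finsupp.add_apply,
    AddMonoidAlgebra.coeff_single, AddMonoidAlgebra.coeff_single, AddMonoidAlgebra.coeff_single,
    Finsupp.single_apply, Finsupp.single_apply,
    Finsupp.single_apply]
  split_ifs <;> omega

end StmtAux

open StmtAux in
theorem stmt_2 (am1 a0 a1 : ℤ) (p : ℕ) (hp : p.Prime) (q r : ℕ) (hr : r < p) :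
    ct ((Ptri am1 a0 a1) ^ (q * p + r)) ≡
      ct ((Ptri am1 a0 a1) ^ q) * ct ((Ptri am1 a0 a1) ^ r) [ZMOD (p : ℤ)] := by

  haveI : Fact p.Prime := ⟨hp⟩
  set P := Ptri am1 a0 a1 with hP
  rw [← ZMod.intCast_eq_intCast_iff]
  push_cast
  have hc : ∀ m : ℕ, ((ct (P ^ m) : ℤ) : ZMod p) = ((phi p) P ^ m).coeff 0 := by
    intro m
    rw [← map_pow]
    exact (mr_apply p (P ^ m) 0).symm
  rw [hc, hc, hc]
  have hsupp : ((phi p) P).coeff.support ⊆ Finset.Icc (-1 : ℤ) 1 :=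
    Finset.Subset.trans (Finsupp.support_mapRange (hf := Int.cast_zero)) (support_Ptri am1 a0 a1)
  have hB := support_pow p ((phi p) P) hsupp r
  calc ((phi p) P ^ (q * p + r)).coeff 0
      = (Ep p ((phi p) P ^ q) * (phi p) P ^ r).coeff 0 := by
        rw [pow_add, pow_mul, pow_card]
    _ = ((phi p) P ^ q).coeff 0 * ((phi p) P ^ r).coeff 0 := key p r hr _ _ hB
end

section
/- Let P(x) = a₋₁x⁻¹ + a₀ + a₁x with integer coefficients and a_n = ct[P(x)^n]. If a prime p divides some a_n, then the set {n : p ∣ a_n} has natural density 1. -/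
open LaurentPolynomial

section Aux

variable (p : ℕ) [Fact p.Prime]

/-- Trinomial with spread `s` over `ZMod p`. -/
noncomputable def trin (a b c : ZMod p) (s : ℤ) : LaurentPolynomial (ZMod p) :=
  C a * T (-s) + C b + C c * T s

lemma trin_single (a b c : ZMod p) (s : ℤ) :
    trin p a b c s = AddMonoidAlgebra.single (-s) a + AddMonoidAlgebra.single 0 b
      + AddMonoidAlgebra.single s c := by
  rw [trin, single_eq_C_mul_T, single_eq_C_mul_T, single_eq_C_mul_T, T_zero, mul_one]

lemma C_inj : Function.Injective (C : ZMod p → LaurentPolynomial (ZMod p)) :=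
  fun _ _ h => by simpa using congrArg (fun q => AddMonoidAlgebra.coeff q 0) h

noncomputable instance : CharP (LaurentPolynomial (ZMod p)) p :=
  charP_of_injective_ringHom (C_inj p) p

lemma trin_frob (a b c : ZMod p) (s : ℤ) :
    (trin p a b c s) ^ p = trin p a b c (p * s) := by
  rw [trin, add_pow_char, add_pow_char, mul_pow, mul_pow, T_pow, T_pow,
    ← map_pow, ← map_pow, ← map_pow, ZMod.pow_card, ZMod.pow_card, ZMod.pow_card,
    show ((p : ℤ) * -s) = -((p : ℤ) * s) by ring, trin]

lemma trin_pow_supp (a b c : ZMod p) (n : ℕ) (m : ℤ) (h : (n : ℤ) < |m|) :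
    ((trin p a b c 1) ^ n).coeff m = 0 := by
  induction n generalizing m with
  | zero =>
      have hm : m ≠ 0 := by intro hm; simp [hm] at h
      rw [pow_zero, AddMonoidAlgebra.one_def, AddMonoidAlgebra.coeff_single, Finsupp.single_apply, if_neg (Ne.symm hm)]
  | succ n ih =>
      have expand : (trin p a b c 1) ^ (n+1)
          = AddMonoidAlgebra.single (-1 : ℤ) a * (trin p a b c 1) ^ n
            + AddMonoidAlgebra.single (0 : ℤ) b * (trin p a b c 1) ^ n
            + AddMonoidAlgebra.single (1 : ℤ) c * (trin p a b c 1) ^ n := by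
        rw [pow_succ']
        nth_rewrite 1 [trin_single p a b c 1]
        rw [add_mul, add_mul]
      have h1 : ((trin p a b c 1) ^ n).coeff (-(-1) + m) = 0 := by
        apply ih; rw [Int.abs_eq_natAbs] at h ⊢; omega
      have h2 : ((trin p a b c 1) ^ n).coeff (-0 + m) = 0 := by
        apply ih; rw [Int.abs_eq_natAbs] at h ⊢; omega
      have h3 : ((trin p a b c 1) ^ n).coeff (-1 + m) = 0 := by
        apply ih; rw [Int.abs_eq_natAbs] at h ⊢; omega
      rw [expand, AddMonoidAlgebra.coeff_add, AddMonoidAlgebra.coeff_add, Finsupp.add_apply,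
        Finsupp.add_apply, AddMonoidAlgebra.coeff_single_mul_apply,
        AddMonoidAlgebra.coeff_single_mul_apply, AddMonoidAlgebra.coeff_single_mul_apply, h1, h2, h3]
      ring

/-- Exponent-dilation by `p` as a ring hom. -/
noncomputable def sig : LaurentPolynomial (ZMod p) →+* LaurentPolynomial (ZMod p) :=
  AddMonoidAlgebra.mapDomainRingHom (ZMod p) (AddMonoidHom.mulLeft (p : ℤ))

lemma sig_single (k : ℤ) (u : ZMod p) :
    sig p (AddMonoidAlgebra.single k u) = AddMonoidAlgebra.single ((p : ℤ) * k) u :=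
  AddMonoidAlgebra.mapDomain_single

lemma sig_trin (a b c : ZMod p) : sig p (trin p a b c 1) = trin p a b c p := by
  rw [trin_single, trin_single, map_add, map_add, sig_single, sig_single, sig_single]
  norm_num

lemma fs_mul_apply (x : ℤ) (r : ZMod p) (f : LaurentPolynomial (ZMod p)) (y : ℤ) :
    ((AddMonoidAlgebra.single x r : LaurentPolynomial (ZMod p)) * f).coeff y = r * f.coeff (-x + y) :=
  AddMonoidAlgebra.coeff_single_mul_apply f r x y

lemma sig_single' (k : ℤ) (u : ZMod p) :
    sig p (AddMonoidAlgebra.single k u) = AddMonoidAlgebra.single ((p : ℤ) * k) u :=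
  sig_single p k u

lemma ct_sig_mul (A B : LaurentPolynomial (ZMod p))
    (hB : ∀ m : ℤ, (p : ℤ) ≤ |m| → B.coeff m = 0) :
    (sig p A * B).coeff 0 = A.coeff 0 * B.coeff 0 := by
  induction A using AddMonoidAlgebra.induction with
  | zero => simp
  | single_add k u f _ _ ih =>
      rw [map_add, sig_single', add_mul, AddMonoidAlgebra.coeff_add, Finsupp.add_apply, ih,
        fs_mul_apply, AddMonoidAlgebra.coeff_add,
        Finsupp.add_apply, AddMonoidAlgebra.coeff_single, Finsupp.single_apply, add_mul]
      congr 1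
      by_cases hk : k = 0
      · subst hk; norm_num
      · rw [if_neg hk]
        have hBz : B.coeff (-((p : ℤ) * k) + 0) = 0 := by
          apply hB
          have h1 : (1 : ℤ) ≤ |k| := Int.one_le_abs (by exact_mod_cast hk)
          have : |(-((p : ℤ) * k) + 0)| = (p : ℤ) * |k| := by
            rw [add_zero, abs_neg, abs_mul, Nat.abs_cast]
          rw [this]
          exact le_mul_of_one_le_right (by positivity) h1
        rw [hBz, mul_zero, zero_mul]

/-- The coefficient sequence over `ZMod p`. -/
noncomputable def bseq (a b c : ZMod p) (n : ℕ) : ZMod p := ((trin p a b c 1) ^ n).coeff 0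

lemma lucas (a b c : ZMod p) (q r : ℕ) (hr : r < p) :
    bseq p a b c (p * q + r) = bseq p a b c q * bseq p a b c r := by
  have h1 : (trin p a b c 1) ^ (p * q + r)
      = sig p ((trin p a b c 1) ^ q) * (trin p a b c 1) ^ r := by
    rw [pow_add, pow_mul, map_pow, sig_trin]
    congr 2
    have := trin_frob p a b c 1
    rw [mul_one] at this
    exact this
  rw [bseq, h1, ct_sig_mul]
  · rfl
  · intro m hm
    apply trin_pow_supp
    calc (r : ℤ) < (p : ℤ) := by exact_mod_cast hr
    _ ≤ |m| := hm

lemma exists_digit (a b c : ZMod p) (h : ∃ n, bseq p a b c n = 0) :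
    ∃ d, d < p ∧ bseq p a b c d = 0 := by
  obtain ⟨n, hn⟩ := h
  induction n using Nat.strong_induction_on with
  | _ n ih =>
    by_cases hnp : n < p
    · exact ⟨n, hnp, hn⟩
    · push_neg at hnp
      have hp1 : 1 < p := (Fact.out (p := p.Prime)).one_lt
      have hpos : 0 < p := by omega
      have hdecomp : p * (n / p) + n % p = n := Nat.div_add_mod n p
      have hl : bseq p a b c n = bseq p a b c (n / p) * bseq p a b c (n % p) := by
        conv_lhs => rw [← hdecomp]
        exact lucas p a b c (n / p) (n % p) (Nat.mod_lt n hpos)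
      rw [hn] at hl
      rcases mul_eq_zero.mp hl.symm with h' | h'
      · exact ih (n / p) (Nat.div_lt_self (by omega) hp1) h'
      · exact ⟨n % p, Nat.mod_lt n hpos, h'⟩

open Finset in
lemma count_le (a b c : ZMod p) (d : ℕ) (hd : d < p) (hd0 : bseq p a b c d = 0) (k : ℕ) :
    (((range (p ^ k)).filter (fun n => bseq p a b c n ≠ 0)).card) ≤ (p - 1) ^ k := by
  induction k with
  | zero =>
      simpa using le_trans (card_filter_le _ _) (by simp)
  | succ k ih =>
      have hp1 : 1 < p := (Fact.out (p := p.Prime)).one_lt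
      have hpos : 0 < p := by omega
      have hmaps : ∀ n ∈ (range (p ^ (k+1))).filter (fun n => bseq p a b c n ≠ 0),
          (n / p, n % p) ∈
            ((range (p ^ k)).filter (fun n => bseq p a b c n ≠ 0)) ×ˢ
              ((range p).filter (fun n => bseq p a b c n ≠ 0)) := by
        intro n hn
        rw [mem_filter, mem_range] at hn
        obtain ⟨hlt, hne⟩ := hn
        have hdecomp : p * (n / p) + n % p = n := Nat.div_add_mod n p
        have hl : bseq p a b c n = bseq p a b c (n / p) * bseq p a b c (n % p) := by
          conv_lhs => rw [← hdecomp]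
          exact lucas p a b c (n / p) (n % p) (Nat.mod_lt n hpos)
        rw [hl] at hne
        rcases mul_ne_zero_iff.mp hne with ⟨h1, h2⟩
        rw [mem_product, mem_filter, mem_filter, mem_range, mem_range]
        refine ⟨⟨?_, h1⟩, Nat.mod_lt n hpos, h2⟩
        rw [Nat.div_lt_iff_lt_mul hpos]
        calc n < p ^ (k+1) := hlt
        _ = p ^ k * p := by rw [pow_succ]
      have hinj : Set.InjOn (fun n => (n / p, n % p))
          ((range (p ^ (k+1))).filter (fun n => bseq p a b c n ≠ 0) : Finset ℕ) := by
        intro x _ y _ hxy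
        simp only [Prod.mk.injEq] at hxy
        obtain ⟨h1, h2⟩ := hxy
        calc x = p * (x / p) + x % p := (Nat.div_add_mod x p).symm
        _ = p * (y / p) + y % p := by rw [h1, h2]
        _ = y := Nat.div_add_mod y p
      refine le_trans (card_le_card_of_injOn _ hmaps hinj) ?_
      rw [card_product]
      have hc2 : ((range p).filter (fun n => bseq p a b c n ≠ 0)).card ≤ p - 1 := by
        have hsub : (range p).filter (fun n => bseq p a b c n ≠ 0) ⊆ (range p).erase d := by
          intro x hx
          rw [mem_filter, mem_range] at hx
          rw [mem_erase, mem_range]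
          refine ⟨?_, hx.1⟩
          rintro rfl
          exact hx.2 hd0
        calc ((range p).filter (fun n => bseq p a b c n ≠ 0)).card
            ≤ ((range p).erase d).card := card_le_card hsub
        _ = p - 1 := by rw [card_erase_of_mem (mem_range.mpr hd), card_range]
      calc ((range (p ^ k)).filter (fun n => bseq p a b c n ≠ 0)).card *
            ((range p).filter (fun n => bseq p a b c n ≠ 0)).card
          ≤ (p - 1) ^ k * (p - 1) := Nat.mul_le_mul ih hc2
      _ = (p - 1) ^ (k + 1) := (pow_succ _ _).symm

/-- Coefficient-cast ring hom `ℤ[T,T⁻¹] → (ZMod p)[T,T⁻¹]`. -/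
noncomputable def tmon : Multiplicative ℤ →* LaurentPolynomial (ZMod p) where
  toFun x := T x.toAdd
  map_one' := T_zero
  map_mul' _ _ := T_add _ _

noncomputable def phi : LaurentPolynomial ℤ →+* LaurentPolynomial (ZMod p) :=
  AddMonoidAlgebra.liftNCRingHom ((LaurentPolynomial.C).comp (Int.castRingHom (ZMod p)))
    (tmon p) (fun _ _ => Commute.all _ _)

lemma phi_single (n : ℤ) (z : ℤ) :
    phi p (AddMonoidAlgebra.single n z) = AddMonoidAlgebra.single n ((z : ZMod p)) := by
  have h : phi p (AddMonoidAlgebra.single n z) = C ((z : ZMod p)) * T n :=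
    AddMonoidAlgebra.liftNC_single _ _ _ _
  rw [h]
  rw [← single_eq_C_mul_T]

lemma phi_apply (Q : LaurentPolynomial ℤ) (m : ℤ) : (phi p Q).coeff m = ((Q.coeff m : ℤ) : ZMod p) := by
  induction Q using AddMonoidAlgebra.induction with
  | zero => simp
  | single_add n z f _ _ ih =>
      rw [map_add, phi_single, AddMonoidAlgebra.coeff_add, AddMonoidAlgebra.coeff_add,
        Finsupp.add_apply, Finsupp.add_apply, Int.cast_add, ih,
        AddMonoidAlgebra.coeff_single, AddMonoidAlgebra.coeff_single,
        Finsupp.single_apply, Finsupp.single_apply]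
      split <;> simp

lemma Ptri_single (am1 a0 a1 : ℤ) :
    Ptri am1 a0 a1 = AddMonoidAlgebra.single (-1) am1 + AddMonoidAlgebra.single 0 a0
      + AddMonoidAlgebra.single 1 a1 := by
  rw [Ptri, single_eq_C_mul_T, single_eq_C_mul_T, single_eq_C_mul_T, T_zero, mul_one]

lemma phi_Ptri (am1 a0 a1 : ℤ) :
    phi p (Ptri am1 a0 a1) = trin p (am1 : ZMod p) (a0 : ZMod p) (a1 : ZMod p) 1 := by
  rw [Ptri_single, map_add, map_add, phi_single, phi_single, phi_single, trin_single]

lemma dvd_iff_bseq (am1 a0 a1 : ℤ) (n : ℕ) :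
    (p : ℤ) ∣ ct ((Ptri am1 a0 a1) ^ n) ↔
      bseq p (am1 : ZMod p) (a0 : ZMod p) (a1 : ZMod p) n = 0 := by
  have h1 : bseq p (am1 : ZMod p) (a0 : ZMod p) (a1 : ZMod p) n
      = ((ct ((Ptri am1 a0 a1) ^ n) : ℤ) : ZMod p) := by
    rw [bseq, ← phi_Ptri, ← map_pow, ct, phi_apply]
  rw [h1]
  exact (ZMod.intCast_zmod_eq_zero_iff_dvd _ p).symm

lemma log_tendsto : Filter.Tendsto (Nat.log p) Filter.atTop Filter.atTop := by
  have hp1 : 1 < p := (Fact.out (p := p.Prime)).one_lt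
  apply Filter.tendsto_atTop_atTop.mpr
  intro b
  refine ⟨p ^ b, fun a ha => ?_⟩
  have ha0 : a ≠ 0 := by
    have : 1 ≤ p ^ b := Nat.one_le_pow _ _ (by omega)
    omega
  exact (Nat.le_log_iff_pow_le hp1 ha0).mpr ha

end Aux

theorem stmt_13 (am1 a0 a1 : ℤ) (p : ℕ) (hp : p.Prime)
    (hdvd : ∃ n : ℕ, (p : ℤ) ∣ ct ((Ptri am1 a0 a1) ^ n)) :
    Filter.Tendsto
      (fun N : ℕ =>
        (((Finset.range N).filter fun n => (p : ℤ) ∣ ct ((Ptri am1 a0 a1) ^ n)).card : ℝ) / N)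
      Filter.atTop (nhds 1) := by
  haveI : Fact p.Prime := ⟨hp⟩
  classical
  set a : ZMod p := (am1 : ZMod p)
  set b : ZMod p := (a0 : ZMod p)
  set c : ZMod p := (a1 : ZMod p)
  have hp1 : 1 < p := hp.one_lt
  -- digit
  obtain ⟨d, hd, hd0⟩ := exists_digit p a b c (by
    obtain ⟨n, hn⟩ := hdvd
    exact ⟨n, (dvd_iff_bseq p am1 a0 a1 n).mp hn⟩)
  -- the "bad" count
  set m : ℕ → ℕ := fun N =>
    ((Finset.range N).filter (fun n => ¬ (p : ℤ) ∣ ct ((Ptri am1 a0 a1) ^ n))).card with hm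
  have hbad : ∀ N : ℕ, m N ≤ (p - 1) ^ (Nat.log p N + 1) := by
    intro N
    show ((Finset.range N).filter
      (fun n => ¬ (p : ℤ) ∣ ct ((Ptri am1 a0 a1) ^ n))).card ≤ (p - 1) ^ (Nat.log p N + 1)
    have hfe : (Finset.range N).filter (fun n => ¬ (p : ℤ) ∣ ct ((Ptri am1 a0 a1) ^ n))
        = (Finset.range N).filter (fun n => bseq p a b c n ≠ 0) := by
      apply Finset.filter_congr
      intro x _
      simp only [dvd_iff_bseq p am1 a0 a1 x, ne_eq]
      exact Iff.rfl
    have hsub : (Finset.range N).filter (fun n => bseq p a b c n ≠ 0)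
        ⊆ (Finset.range (p ^ (Nat.log p N + 1))).filter (fun n => bseq p a b c n ≠ 0) := by
      apply Finset.filter_subset_filter
      apply Finset.range_subset_range.mpr
      exact le_of_lt (Nat.lt_pow_succ_log_self hp1 N)
    rw [hfe]
    exact le_trans (Finset.card_le_card hsub) (count_le p a b c d hd hd0 _)
  -- arithmetic: card of good = N - m N
  have hcard : ∀ N : ℕ,
      ((Finset.range N).filter (fun n => (p : ℤ) ∣ ct ((Ptri am1 a0 a1) ^ n))).card + m N = N := by
    intro N
    show ((Finset.range N).filter (fun n => (p : ℤ) ∣ ct ((Ptri am1 a0 a1) ^ n))).card +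
      ((Finset.range N).filter (fun n => ¬ (p : ℤ) ∣ ct ((Ptri am1 a0 a1) ^ n))).card = N
    rw [Finset.card_filter_add_card_filter_not, Finset.card_range]
  -- real sequence f N = m N / N tends to 0
  set r : ℝ := ((p : ℝ) - 1) / p with hr
  have hr0 : 0 ≤ r := by
    apply div_nonneg
    · have : (1 : ℝ) ≤ (p : ℝ) := by exact_mod_cast hp1.le
      linarith
    · positivity
  have hr1 : r < 1 := by
    rw [hr, div_lt_one (by positivity)]
    linarith
  have hgto : Filter.Tendsto (fun N : ℕ => ((p : ℝ) - 1) * r ^ (Nat.log p N))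
      Filter.atTop (nhds 0) := by
    have h1 : Filter.Tendsto (fun k : ℕ => ((p : ℝ) - 1) * r ^ k) Filter.atTop
        (nhds (((p : ℝ) - 1) * 0)) :=
      (tendsto_pow_atTop_nhds_zero_of_lt_one hr0 hr1).const_mul _
    rw [mul_zero] at h1
    exact h1.comp (log_tendsto p)
  have hf0 : Filter.Tendsto (fun N : ℕ => (m N : ℝ) / N) Filter.atTop (nhds 0) := by
    apply squeeze_zero' (g := fun N => ((p : ℝ) - 1) * r ^ (Nat.log p N))
    · filter_upwards with N
      positivity
    · filter_upwards [Filter.eventually_ge_atTop 1] with N hN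
      set k := Nat.log p N
      have hNk : (p : ℝ) ^ k ≤ (N : ℝ) := by
        exact_mod_cast Nat.pow_log_le_self p (by omega)
      have hmk : (m N : ℝ) ≤ ((p : ℝ) - 1) ^ (k + 1) := by
        calc (m N : ℝ) ≤ (((p - 1 : ℕ) : ℝ)) ^ (k + 1) := by exact_mod_cast hbad N
        _ = ((p : ℝ) - 1) ^ (k + 1) := by
            congr 1
            have : ((p - 1 : ℕ) : ℝ) = (p : ℝ) - 1 := by
              have : 1 ≤ p := hp1.le
              push_cast [this]
              ring
            rw [this]
      have hp0 : (0 : ℝ) ≤ (p : ℝ) - 1 := by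
        have : (1 : ℝ) ≤ (p : ℝ) := by exact_mod_cast hp1.le
        linarith
      calc (m N : ℝ) / N ≤ ((p : ℝ) - 1) ^ (k + 1) / (p : ℝ) ^ k := by
            apply div_le_div₀ (pow_nonneg hp0 _) hmk (by positivity) hNk
      _ = ((p : ℝ) - 1) * r ^ k := by
            rw [hr, div_pow, pow_succ]
            ring
    · exact hgto
  -- conclude
  have heq : (fun N : ℕ =>
      (((Finset.range N).filter fun n => (p : ℤ) ∣ ct ((Ptri am1 a0 a1) ^ n)).card : ℝ) / N)
        =ᶠ[Filter.atTop] (fun N : ℕ => 1 - (m N : ℝ) / N) := by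
    filter_upwards [Filter.eventually_ge_atTop 1] with N hN
    have hN0 : (N : ℝ) ≠ 0 := by positivity
    have h := hcard N
    have : (((Finset.range N).filter fun n => (p : ℤ) ∣ ct ((Ptri am1 a0 a1) ^ n)).card : ℝ)
        = (N : ℝ) - (m N : ℝ) := by
      have := congrArg (fun x : ℕ => (x : ℝ)) h
      push_cast at this
      linarith
    rw [this]
    field_simp
  have hlim : Filter.Tendsto (fun N : ℕ => 1 - (m N : ℝ) / N) Filter.atTop (nhds 1) := by
    have := hf0.const_sub 1
    simpa using this
  exact Filter.Tendsto.congr' heq.symm hlim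
end
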